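/- For every α ∈ (0,1) with β = 1−α, the function g_α(x) = e^{-x}/(1−e^{-x}) − e^{-x/α}/(1−e^{-x/α}) − e^{-x/β}/(1−e^{-x/β}) satisfies g_α(x) = x ∫_1^∞ e^{-tx} ([t] − [αt] − [βt]) dt for every x > 0, where [·] denotes the integer part. -/

import Mathlib

open MeasureTheory Set Real Filter Topology

lemma ldr_integrableOn_id_mul_exp (x : ℝ) (hx : 0 < x) :
    IntegrableOn (fun t : ℝ => t * Real.exp (-x * t)) (Set.Ioi 1) := by
  apply integrable_of_isBigO_exp_neg (half_pos hx)
  · exact (continuous_id.mul (Real.continuous_exp.comp (continuous_const.mul continuous_id))).continuousOn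
  · have h0 : Tendsto (fun t : ℝ => t ^ (1:ℝ) * Real.exp (-(x/2) * t)) atTop (𝓝 0) :=
      tendsto_rpow_mul_exp_neg_mul_atTop_nhds_zero 1 (x/2) (half_pos hx)
    have h0' : Tendsto (fun t : ℝ => t * Real.exp (-(x/2) * t)) atTop (𝓝 0) := by
      refine Filter.Tendsto.congr' ?_ h0
      filter_upwards [eventually_ge_atTop (0:ℝ)] with t ht
      rw [Real.rpow_one]
    have h1 : (fun t : ℝ => t * Real.exp (-(x/2) * t)) =O[atTop] (fun _ : ℝ => (1:ℝ)) :=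
      h0'.isBigO_one ℝ
    have h2 : (fun t : ℝ => t * Real.exp (-x * t)) =ᶠ[atTop]
        (fun t : ℝ => (t * Real.exp (-(x/2) * t)) * Real.exp (-(x/2) * t)) := by
      filter_upwards with t
      rw [mul_assoc, ← Real.exp_add]
      ring_nf
    have hO := h1.mul (Asymptotics.isBigO_refl (fun t : ℝ => Real.exp (-(x/2) * t)) atTop)
    simp only [one_mul] at hO
    exact h2.isBigO.trans hO

lemma ldr_measurable (x c : ℝ) :
    Measurable (fun t : ℝ => Real.exp (-t * x) * (⌊c * t⌋ : ℝ)) := by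
  apply (Real.measurable_exp.comp (measurable_id.neg.mul measurable_const)).mul
  exact measurable_from_top.comp ((measurable_const.mul measurable_id).floor)

lemma ldr_integrableOn (x c : ℝ) (hx : 0 < x) (hc : 0 < c) (hc1 : c ≤ 1) :
    IntegrableOn (fun t : ℝ => Real.exp (-t * x) * (⌊c * t⌋ : ℝ)) (Set.Ioi 1) := by
  refine (ldr_integrableOn_id_mul_exp x hx).mono' (ldr_measurable x c).aestronglyMeasurable ?_
  filter_upwards [ae_restrict_mem measurableSet_Ioi] with t ht
  have ht1 : (1:ℝ) < t := ht
  have ht0 : 0 < t := lt_trans one_pos ht1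
  have hct : 0 ≤ c * t := le_of_lt (mul_pos hc ht0)
  have hfl0 : (0:ℝ) ≤ (⌊c * t⌋ : ℝ) := by
    exact_mod_cast Int.floor_nonneg.mpr hct
  have hfl : (⌊c * t⌋ : ℝ) ≤ t := by
    calc (⌊c * t⌋ : ℝ) ≤ c * t := Int.floor_le _
      _ ≤ 1 * t := by nlinarith
      _ = t := one_mul t
  rw [Real.norm_eq_abs, abs_mul, abs_of_pos (Real.exp_pos _), abs_of_nonneg hfl0,
    show -t * x = -x * t by ring]
  calc Real.exp (-x * t) * (⌊c * t⌋ : ℝ) ≤ Real.exp (-x * t) * t :=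
        mul_le_mul_of_nonneg_left hfl (Real.exp_pos _).le
    _ = t * Real.exp (-x * t) := mul_comm _ _

lemma ldr_sum (r : ℝ) (hr0 : 0 ≤ r) (hr1 : r < 1) :
    ∑' n : ℕ, ((n:ℝ) + 1) * (r ^ (n+1) - r ^ (n+2)) = r / (1 - r) := by
  have hnorm : ‖r‖ < 1 := by rwa [Real.norm_eq_abs, abs_of_nonneg hr0]
  have hsum : ∑' n : ℕ, (n : ℝ) * r ^ n = r / (1 - r) ^ 2 :=
    tsum_coe_mul_geometric_of_norm_lt_one hnorm
  have hsummable : Summable (fun n : ℕ => (n : ℝ) * r ^ n) := by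
    simpa using summable_pow_mul_geometric_of_norm_lt_one 1 hnorm
  have hshift : ∑' n : ℕ, ((n:ℝ) + 1) * r ^ (n+1) = r / (1 - r) ^ 2 := by
    have h := hsummable.tsum_eq_zero_add
    simp only [Nat.cast_zero, zero_mul, pow_zero, zero_add, Nat.cast_add, Nat.cast_one] at h
    rw [← hsum, h]
  have key : ∀ n : ℕ, ((n:ℝ) + 1) * (r ^ (n+1) - r ^ (n+2)) =
      (1 - r) * (((n:ℝ) + 1) * r ^ (n+1)) := by
    intro n; ring
  rw [tsum_congr key, tsum_mul_left, hshift]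
  have h1r : 1 - r ≠ 0 := by linarith
  field_simp

lemma ldr_iUnion : Set.Ioi (1:ℝ) = ⋃ n : ℕ, Set.Ioc ((n:ℝ) + 1) ((n:ℝ) + 2) := by
  ext t
  simp only [mem_Ioi, mem_iUnion, mem_Ioc]
  constructor
  · intro ht
    have ht0 : (0:ℝ) ≤ t - 1 := by linarith
    have h1 : 1 ≤ ⌈t - 1⌉₊ := Nat.one_le_ceil_iff.mpr (by linarith)
    refine ⟨⌈t - 1⌉₊ - 1, ?_, ?_⟩
    · have := Nat.ceil_lt_add_one ht0
      push_cast [h1]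
      linarith
    · have := Nat.le_ceil (t - 1)
      push_cast [h1]
      linarith
  · rintro ⟨n, h1, h2⟩
    have : (0:ℝ) ≤ n := Nat.cast_nonneg n
    linarith

lemma ldr_exp_integral (y : ℝ) (hy : 0 < y) (a b : ℝ) (hab : a ≤ b) :
    ∫ t in Set.Ioo a b, Real.exp (-t * y)
      = (Real.exp (-a * y) - Real.exp (-b * y)) / y := by
  rw [← integral_Ioc_eq_integral_Ioo, ← intervalIntegral.integral_of_le hab]
  have hderiv : ∀ t ∈ Set.uIcc a b, HasDerivAt (fun u : ℝ => -Real.exp (-u * y) / y)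
      (Real.exp (-t * y)) t := by
    intro t _
    have h1 : HasDerivAt (fun u : ℝ => -u * y) (-y) t := by
      simpa using ((hasDerivAt_id t).neg.mul_const y)
    have h2 := (h1.exp).neg.div_const y
    refine h2.congr_deriv ?_
    field_simp
  have hcont : IntervalIntegrable (fun t : ℝ => Real.exp (-t * y)) volume a b :=
    (Real.continuous_exp.comp (continuous_id.neg.mul continuous_const)).intervalIntegrable a b
  rw [intervalIntegral.integral_eq_sub_of_hasDerivAt hderiv hcont]
  field_simp
  ring

lemma ldr_base (y : ℝ) (hy : 0 < y) :
    ∫ t in Set.Ioi (1:ℝ), Real.exp (-t * y) * (⌊t⌋ : ℝ)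
      = Real.exp (-y) / (1 - Real.exp (-y)) / y := by
  have hmeas : ∀ n : ℕ, MeasurableSet (Set.Ioc ((n:ℝ) + 1) ((n:ℝ) + 2)) :=
    fun n => measurableSet_Ioc
  have hdisj : Pairwise (Function.onFun Disjoint fun n : ℕ => Set.Ioc ((n:ℝ) + 1) ((n:ℝ) + 2)) := by
    intro m n hmn
    apply Set.Ioc_disjoint_Ioc.mpr
    rcases hmn.lt_or_gt with h | h
    · have hcast : (m:ℝ) + 2 ≤ (n:ℝ) + 1 := by
        have : m + 1 ≤ n := h
        have : (m:ℝ) + 1 ≤ (n:ℝ) := by exact_mod_cast this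
        linarith
      exact le_trans (min_le_left _ _) (le_trans hcast (le_max_right _ _))
    · have hcast : (n:ℝ) + 2 ≤ (m:ℝ) + 1 := by
        have : n + 1 ≤ m := h
        have : (n:ℝ) + 1 ≤ (m:ℝ) := by exact_mod_cast this
        linarith
      exact le_trans (min_le_right _ _) (le_trans hcast (le_max_left _ _))
  have hint : IntegrableOn (fun t : ℝ => Real.exp (-t * y) * (⌊t⌋ : ℝ)) (Set.Ioi 1) := by
    have := ldr_integrableOn y 1 hy one_pos le_rfl
    simpa using this
  rw [ldr_iUnion] at hint ⊢
  rw [integral_iUnion hmeas hdisj hint]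
  have hpiece : ∀ n : ℕ, ∫ t in Set.Ioc ((n:ℝ) + 1) ((n:ℝ) + 2), Real.exp (-t * y) * (⌊t⌋ : ℝ)
      = ((n:ℝ) + 1) * (Real.exp (-y) ^ (n+1) - Real.exp (-y) ^ (n+2)) / y := by
    intro n
    rw [integral_Ioc_eq_integral_Ioo]
    have hcongr : Set.EqOn (fun t : ℝ => Real.exp (-t * y) * (⌊t⌋ : ℝ))
        (fun t : ℝ => Real.exp (-t * y) * ((n:ℝ) + 1)) (Set.Ioo ((n:ℝ) + 1) ((n:ℝ) + 2)) := by
      intro t ht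
      have hfl : ⌊t⌋ = (n:ℤ) + 1 := by
        rw [Int.floor_eq_iff]
        constructor
        · push_cast; linarith [ht.1]
        · push_cast; linarith [ht.2]
      simp only [hfl]
      push_cast
      ring_nf
    rw [setIntegral_congr_fun measurableSet_Ioo hcongr, integral_mul_const,
      ldr_exp_integral y hy _ _ (by linarith)]
    have e1 : Real.exp (-((n:ℝ) + 1) * y) = Real.exp (-y) ^ (n+1) := by
      rw [show -((n:ℝ) + 1) * y = ((n:ℕ)+1 : ℕ) * (-y) by push_cast; ring, Real.exp_nat_mul]
    have e2 : Real.exp (-((n:ℝ) + 2) * y) = Real.exp (-y) ^ (n+2) := by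
      rw [show -((n:ℝ) + 2) * y = ((n:ℕ)+2 : ℕ) * (-y) by push_cast; ring, Real.exp_nat_mul]
    rw [e1, e2]
    ring
  rw [tsum_congr hpiece,
    tsum_congr (fun n : ℕ => (div_eq_mul_inv (((n:ℝ) + 1) * (Real.exp (-y) ^ (n+1) - Real.exp (-y) ^ (n+2))) y)),
    tsum_mul_right,
    ldr_sum (Real.exp (-y)) (Real.exp_pos _).le (Real.exp_lt_one_iff.mpr (by linarith))]
  ring

lemma ldr_gen (x c : ℝ) (hx : 0 < x) (hc : 0 < c) (hc1 : c ≤ 1) :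
    x * ∫ t in Set.Ioi (1:ℝ), Real.exp (-t * x) * (⌊c * t⌋ : ℝ)
      = Real.exp (-x / c) / (1 - Real.exp (-x / c)) := by
  set y := x / c with hy_def
  have hy : 0 < y := div_pos hx hc
  have hfun : (fun t : ℝ => Real.exp (-t * x) * (⌊c * t⌋ : ℝ))
      = fun t : ℝ => (fun s : ℝ => Real.exp (-s * y) * (⌊s⌋ : ℝ)) (c * t) := by
    funext t
    simp only
    congr 1
    rw [hy_def]
    field_simp
  rw [hfun, integral_comp_mul_left_Ioi (fun s : ℝ => Real.exp (-s * y) * (⌊s⌋ : ℝ)) 1 hc,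
    mul_one]
  -- split Ioi c = Ioc c 1 ∪ Ioi 1
  have hzero : (fun s : ℝ => Real.exp (-s * y) * (⌊s⌋ : ℝ))
      =ᶠ[ae (volume.restrict (Set.Ioc c 1))] (fun _ => (0:ℝ)) := by
    have h1 : ∀ᵐ s : ℝ, s ≠ 1 := by
      rw [ae_iff]
      have : {s : ℝ | ¬ s ≠ 1} = {1} := by ext s; simp [not_not]
      rw [this]
      exact Real.volume_singleton
    filter_upwards [ae_restrict_mem measurableSet_Ioc, ae_restrict_of_ae h1] with s hs hs1
    have hfl : ⌊s⌋ = 0 := by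
      apply Int.floor_eq_zero_iff.mpr
      constructor
      · exact le_of_lt (lt_of_le_of_lt hc.le hs.1)
      · exact lt_of_le_of_ne hs.2 hs1
    simp [hfl]
  have hint1 : IntegrableOn (fun s : ℝ => Real.exp (-s * y) * (⌊s⌋ : ℝ)) (Set.Ioi 1) := by
    have := ldr_integrableOn y 1 hy one_pos le_rfl
    simpa using this
  have hintc : IntegrableOn (fun s : ℝ => Real.exp (-s * y) * (⌊s⌋ : ℝ)) (Set.Ioc c 1) :=
    (integrable_zero _ _ _).congr hzero.symm
  have hunion : Set.Ioc c 1 ∪ Set.Ioi (1:ℝ) = Set.Ioi c := Set.Ioc_union_Ioi_eq_Ioi hc1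
  have hsplit : ∫ s in Set.Ioi c, Real.exp (-s * y) * (⌊s⌋ : ℝ)
      = (∫ s in Set.Ioc c 1, Real.exp (-s * y) * (⌊s⌋ : ℝ))
        + ∫ s in Set.Ioi 1, Real.exp (-s * y) * (⌊s⌋ : ℝ) := by
    rw [← hunion]
    exact setIntegral_union (Set.Ioc_disjoint_Ioi le_rfl) measurableSet_Ioi hintc hint1
  have hzero' : ∫ s in Set.Ioc c 1, Real.exp (-s * y) * (⌊s⌋ : ℝ) = 0 := by
    rw [integral_congr_ae hzero, integral_zero]
  rw [smul_eq_mul, hsplit, hzero', zero_add, ldr_base y hy]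
  have hrw : x * (c⁻¹ * (Real.exp (-y) / (1 - Real.exp (-y)) / y))
      = (x * c⁻¹ / y) * (Real.exp (-y) / (1 - Real.exp (-y))) := by ring
  have hone : x * c⁻¹ / y = 1 := by
    rw [hy_def]
    field_simp
  rw [hrw, hone, one_mul, hy_def, neg_div]

theorem levy_density_representation (α : ℝ) (hα : α ∈ Set.Ioo (0:ℝ) 1) (x : ℝ) (hx : 0 < x) :
    Real.exp (-x) / (1 - Real.exp (-x)) -
      Real.exp (-x / α) / (1 - Real.exp (-x / α)) -
      Real.exp (-x / (1 - α)) / (1 - Real.exp (-x / (1 - α))) =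
    x * ∫ t in Set.Ioi (1:ℝ),
      Real.exp (-t * x) * ((⌊t⌋ : ℝ) - (⌊α * t⌋ : ℝ) - (⌊(1 - α) * t⌋ : ℝ)) := by
  obtain ⟨hα0, hα1⟩ := hα
  have hβ0 : 0 < 1 - α := by linarith
  have hβ1 : 1 - α ≤ 1 := by linarith
  have i1 := ldr_integrableOn x 1 hx one_pos le_rfl
  have i2 := ldr_integrableOn x α hx hα0 hα1.le
  have i3 := ldr_integrableOn x (1 - α) hx hβ0 hβ1
  have hsplit : ∫ t in Set.Ioi (1:ℝ),
      Real.exp (-t * x) * ((⌊t⌋ : ℝ) - (⌊α * t⌋ : ℝ) - (⌊(1 - α) * t⌋ : ℝ))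
      = (∫ t in Set.Ioi (1:ℝ), Real.exp (-t * x) * (⌊(1:ℝ) * t⌋ : ℝ))
        - (∫ t in Set.Ioi (1:ℝ), Real.exp (-t * x) * (⌊α * t⌋ : ℝ))
        - (∫ t in Set.Ioi (1:ℝ), Real.exp (-t * x) * (⌊(1 - α) * t⌋ : ℝ)) := by
    calc ∫ t in Set.Ioi (1:ℝ),
          Real.exp (-t * x) * ((⌊t⌋ : ℝ) - (⌊α * t⌋ : ℝ) - (⌊(1 - α) * t⌋ : ℝ))
        = ∫ t in Set.Ioi (1:ℝ),
            ((Real.exp (-t * x) * (⌊(1:ℝ) * t⌋ : ℝ) - Real.exp (-t * x) * (⌊α * t⌋ : ℝ))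
              - Real.exp (-t * x) * (⌊(1 - α) * t⌋ : ℝ)) := by
          congr 1
          funext t
          simp only [one_mul]
          ring
      _ = _ := by
          have i12 : IntegrableOn (fun t : ℝ =>
              Real.exp (-t * x) * (⌊(1:ℝ) * t⌋ : ℝ) - Real.exp (-t * x) * (⌊α * t⌋ : ℝ))
              (Set.Ioi 1) := i1.sub i2
          rw [integral_sub i12 i3, integral_sub i1 i2]
  rw [hsplit, mul_sub, mul_sub, ldr_gen x 1 hx one_pos le_rfl,
    ldr_gen x α hx hα0 hα1.le, ldr_gen x (1 - α) hx hβ0 hβ1, div_one]
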